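/- Diagonal matrix elements: under the hypotheses of the previous lemma, for every j ∈ ℕ, ⟨b₀ e_j, e_j⟩ = (1/π)∫₀^π b₀(x)dx + r_j(b₀) with |r_j(b₀)| ≤ c(δ)‖b₀‖_{H^{r+1+δ}_x}/(2ω_j)^r. -/

import Mathlib

/-- The spherically symmetric eigenfunctions `e_j(x) = sin((j+1)x)/sin x` on `(0,π)`. -/
noncomputable def sphEig (j : ℕ) (x : ℝ) : ℝ := Real.sin (((j : ℝ) + 1) * x) / Real.sin x

/-- The embedding constant `c(δ) = √(2π) (∑_j (j+1)^{-1-2δ})^{1/2}` of `H^{r+1+δ}_x` into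
`H^r(S¹,dx)`. -/
noncomputable def embConst (δ : ℝ) : ℝ :=
  Real.sqrt (2 * Real.pi) * Real.sqrt (∑' j : ℕ, ((j : ℝ) + 1) ^ (-(1 + 2 * δ)))

open Real MeasureTheory Set

namespace Stmt14Aux

/-- abs sin bound -/
lemma abs_sin_nat_le (n : ℕ) (x : ℝ) : |Real.sin ((n : ℝ) * x)| ≤ (n : ℝ) * |Real.sin x| := by
  induction n with
  | zero => simp
  | succ n ih =>
    have : ((n : ℝ) + 1) * x = (n : ℝ) * x + x := by ring
    push_cast
    rw [this, Real.sin_add]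
    have h1 : |Real.sin ((n:ℝ)*x) * Real.cos x + Real.cos ((n:ℝ)*x) * Real.sin x|
        ≤ |Real.sin ((n:ℝ)*x)| * |Real.cos x| + |Real.cos ((n:ℝ)*x)| * |Real.sin x| := by
      rw [← abs_mul, ← abs_mul]; exact abs_add_le _ _
    nlinarith [ih, abs_nonneg (Real.sin x), abs_nonneg (Real.sin ((n:ℝ)*x)),
      Real.abs_cos_le_one x, Real.abs_cos_le_one ((n:ℝ)*x), abs_nonneg (Real.cos ((n:ℝ)*x)),
      abs_nonneg (Real.cos x)]

noncomputable def q (n : ℕ) (x : ℝ) : ℝ := Real.sin ((n : ℝ) * x) / Real.sin x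

lemma q_meas (n : ℕ) : Measurable (q n) := by
  exact (Real.continuous_sin.comp (continuous_const.mul continuous_id)).measurable.div
    Real.continuous_sin.measurable

lemma q_abs_le (n : ℕ) (x : ℝ) : |q n x| ≤ (n : ℝ) := by
  unfold q
  rcases eq_or_ne (Real.sin x) 0 with h | h
  · simp [h]
  · rw [abs_div, div_le_iff₀ (abs_pos.mpr h)]
    exact abs_sin_nat_le n x

lemma q_int (n : ℕ) : IntegrableOn (q n) (Ioo 0 π) := by
  refine Integrable.mono' (integrable_const (n : ℝ)) ((q_meas n).aestronglyMeasurable) ?_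
  exact Filter.Eventually.of_forall fun x => (by simpa using q_abs_le n x)

lemma cos_int (c : ℝ) : IntegrableOn (fun x => Real.cos (c * x)) (Ioo 0 π) :=
  ((Real.continuous_cos.comp (continuous_const.mul continuous_id)).integrableOn_Ioc).mono_set
    Set.Ioo_subset_Ioc_self

lemma integral_cos_Ioo (m : ℕ) (hm : m ≠ 0) : ∫ x in Ioo 0 π, Real.cos ((m:ℝ) * x) = 0 := by
  have h1 : ∫ x in Ioo 0 π, Real.cos ((m:ℝ) * x) = ∫ x in (0:ℝ)..π, Real.cos ((m:ℝ) * x) := by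
    rw [intervalIntegral.integral_of_le Real.pi_pos.le, integral_Ioc_eq_integral_Ioo]
  have hc : (m : ℝ) ≠ 0 := Nat.cast_ne_zero.mpr hm
  rw [h1, intervalIntegral.integral_comp_mul_left _ hc, mul_zero, integral_cos]
  simp [Real.sin_nat_mul_pi]

noncomputable def J (n : ℕ) : ℝ := ∫ x in Ioo 0 π, q n x

lemma J_zero : J 0 = 0 := by
  unfold J q; simp

lemma J_one : J 1 = π := by
  unfold J
  have : ∀ x ∈ Ioo (0:ℝ) π, q 1 x = 1 := by
    intro x hx
    have : Real.sin x ≠ 0 := ne_of_gt (Real.sin_pos_of_pos_of_lt_pi hx.1 hx.2)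
    simp [q, div_self this]
  rw [setIntegral_congr_fun measurableSet_Ioo this]
  simp [Real.volume_Ioo, ENNReal.toReal_ofReal Real.pi_pos.le, Real.pi_pos.le]

lemma J_step (n : ℕ) : J (n + 2) = J n := by
  have key : ∀ x ∈ Ioo (0:ℝ) π, q (n+2) x = q n x + 2 * Real.cos (((n:ℝ)+1) * x) := by
    intro x hx
    have hs : Real.sin x ≠ 0 := ne_of_gt (Real.sin_pos_of_pos_of_lt_pi hx.1 hx.2)
    have : Real.sin (((n:ℝ)+2) * x) = Real.sin ((n:ℝ) * x) + 2 * Real.cos (((n:ℝ)+1) * x) * Real.sin x := by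
      have e1 : ((n:ℝ)+2) * x = ((n:ℝ)+1) * x + x := by ring
      have e2 : (n:ℝ) * x = ((n:ℝ)+1) * x - x := by ring
      rw [e1, e2, Real.sin_add, Real.sin_sub]; ring
    unfold q
    push_cast
    rw [this, add_div, mul_div_assoc, div_self hs, mul_one]
  rw [J, setIntegral_congr_fun measurableSet_Ioo key,
    integral_add (q_int n) (by simpa using (cos_int ((n:ℝ)+1)).const_mul 2)]
  have : ∫ x in Ioo 0 π, 2 * Real.cos (((n:ℝ)+1)*x) = 0 := by
    rw [integral_const_mul]
    have := integral_cos_Ioo (n+1) (Nat.succ_ne_zero n)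
    push_cast at this
    rw [this, mul_zero]
  rw [this, add_zero]; rfl

lemma J_val : ∀ n : ℕ, J n = if Odd n then π else 0
  | 0 => by simp [J_zero]
  | 1 => by simp [J_one]
  | (n + 2) => by
      rw [J_step n, J_val n]
      simp [Nat.odd_add_one, Nat.even_add_one, parity_simps]


lemma sphEig_eq_q (i : ℕ) : sphEig i = q (i+1) := by
  funext x; unfold sphEig q; push_cast; ring_nf

lemma sin_mul_cos_eq (a b x : ℝ) :
    Real.sin (a*x) * Real.cos (b*x) = (Real.sin ((a+b)*x) + Real.sin ((a-b)*x))/2 := by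
  rw [add_mul, sub_mul, Real.sin_add, Real.sin_sub]; ring

lemma q_mul_cos_eq_of_le (c d : ℕ) (hdc : d ≤ c) (x : ℝ) :
    q c x * Real.cos ((d:ℝ) * x) = (q (c+d) x + q (c-d) x)/2 := by
  unfold q
  rw [Nat.cast_add, Nat.cast_sub hdc, div_mul_eq_mul_div, sin_mul_cos_eq]
  ring

lemma q_mul_cos_eq_of_ge (c d : ℕ) (hdc : c ≤ d) (x : ℝ) :
    q c x * Real.cos ((d:ℝ) * x) = (q (c+d) x - q (d-c) x)/2 := by
  unfold q
  have h : Real.sin (((c:ℝ)-d)*x) = - Real.sin (((d:ℝ)-c)*x) := by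
    rw [show ((c:ℝ)-d)*x = -(((d:ℝ)-c)*x) by ring, Real.sin_neg]
  rw [Nat.cast_add, Nat.cast_sub hdc, div_mul_eq_mul_div, sin_mul_cos_eq, h]
  ring

/-- value of `∫ e_i cos(2m x)` -/
lemma integral_sphEig_cos (i m : ℕ) :
    ∫ x in Ioo 0 π, sphEig i x * Real.cos (((2*m : ℕ):ℝ) * x)
      = if Even i ∧ 2*m ≤ i then π else 0 := by
  rw [sphEig_eq_q]
  rcases le_or_gt (2*m) (i+1) with hle | hlt
  · have heq : ∀ x, q (i+1) x * Real.cos (((2*m:ℕ):ℝ) * x)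
        = (q (i+1+2*m) x + q (i+1-2*m) x)/2 := q_mul_cos_eq_of_le (i+1) (2*m) hle
    rw [integral_congr_ae (Filter.Eventually.of_forall heq)]
    rw [integral_div, integral_add (q_int _) (q_int _)]
    have h1 : (J (i+1+2*m) + J (i+1-2*m))/2 = if Even i ∧ 2*m ≤ i then π else 0 := by
      rw [J_val, J_val]
      rcases Nat.even_or_odd i with he | ho
      · have o1 : Odd (i+1+2*m) := by
          rcases he with ⟨k, hk⟩; exact ⟨k+m, by omega⟩
        have hm : 2*m ≤ i := by
          rcases he with ⟨k, hk⟩; omega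
        have o2 : Odd (i+1-2*m) := by
          rcases he with ⟨k, hk⟩; exact ⟨k-m, by omega⟩
        simp [o1, o2, he, hm]
      · have o1 : ¬ Odd (i+1+2*m) := by
          rcases ho with ⟨k, hk⟩; simp [Nat.odd_iff]; omega
        have o2 : ¬ Odd (i+1-2*m) := by
          rcases ho with ⟨k, hk⟩; simp [Nat.odd_iff]; omega
        have : ¬ Even i := Nat.not_even_iff_odd.mpr ho
        simp [o1, o2, this]
    exact h1
  · have heq : ∀ x, q (i+1) x * Real.cos (((2*m:ℕ):ℝ) * x)
        = (q (i+1+2*m) x - q (2*m-(i+1)) x)/2 := q_mul_cos_eq_of_ge (i+1) (2*m) hlt.le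
    rw [integral_congr_ae (Filter.Eventually.of_forall heq)]
    rw [integral_div, integral_sub (q_int _) (q_int _)]
    have h1 : (J (i+1+2*m) - J (2*m-(i+1)))/2 = 0 := by
      rw [J_val, J_val]
      rcases Nat.even_or_odd i with he | ho
      · have o1 : Odd (i+1+2*m) := by rcases he with ⟨k, hk⟩; exact ⟨k+m, by omega⟩
        have o2 : Odd (2*m-(i+1)) := by rcases he with ⟨k, hk⟩; exact ⟨m-k-1, by omega⟩
        simp [o1, o2]
      · have o1 : ¬ Odd (i+1+2*m) := by rcases ho with ⟨k, hk⟩; simp [Nat.odd_iff]; omega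
        have o2 : ¬ Odd (2*m-(i+1)) := by rcases ho with ⟨k, hk⟩; simp [Nat.odd_iff]; omega
        simp [o1, o2]
    rw [show (∫ (a : ℝ) in Ioo 0 π, q (i + 1 + 2 * m) a ∂volume) = J (i+1+2*m) from rfl, show (∫ (a : ℝ) in Ioo 0 π, q (2*m-(i+1)) a ∂volume) = J (2*m-(i+1)) from rfl, h1]
    have : ¬ (2*m ≤ i) := by omega
    simp [this]

lemma integral_sphEig (i : ℕ) :
    ∫ x in Ioo 0 π, sphEig i x = if Even i then π else 0 := by
  rw [sphEig_eq_q]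
  have : (∫ x in Ioo 0 π, q (i+1) x) = J (i+1) := rfl
  rw [this, J_val]
  rcases Nat.even_or_odd i with he | ho
  · have : Odd (i+1) := Even.add_one he
    simp [this, he]
  · have h2 : ¬ Odd (i+1) := by rcases ho with ⟨k, hk⟩; simp [Nat.odd_iff]; omega
    have : ¬ Even i := Nat.not_even_iff_odd.mpr ho
    simp [h2, this]


lemma sphEig_meas (i : ℕ) : Measurable (sphEig i) := by rw [sphEig_eq_q]; exact q_meas _

lemma sphEig_int (i : ℕ) : IntegrableOn (sphEig i) (Ioo 0 π) := by
  rw [sphEig_eq_q]; exact q_int _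

lemma abs_sphEig_le (i : ℕ) (x : ℝ) : |sphEig i x| ≤ (i : ℝ) + 1 := by
  rw [sphEig_eq_q]
  have := q_abs_le (i+1) x
  push_cast at this ⊢
  exact this

lemma abs_sphEig_le_sqrt (i : ℕ) {x : ℝ} (hx : x ∈ Ioo 0 π) :
    |sphEig i x| ≤ Real.sqrt ((i:ℝ)+1) * Real.sqrt (Real.sin x)⁻¹ := by
  have hs : 0 < Real.sin x := Real.sin_pos_of_pos_of_lt_pi hx.1 hx.2
  have h1 : sphEig i x ^ 2 ≤ ((i:ℝ)+1) * (Real.sin x)⁻¹ := by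
    have hb : |Real.sin ((((i:ℕ):ℝ)+1) * x)| ≤ ((i:ℝ)+1) * |Real.sin x| := by
      have := abs_sin_nat_le (i+1) x
      push_cast at this ⊢
      exact this
    have hb1 : |Real.sin ((((i:ℕ):ℝ)+1) * x)| ≤ 1 := Real.abs_sin_le_one _
    have habs : |Real.sin x| = Real.sin x := abs_of_pos hs
    unfold sphEig
    rw [div_pow]
    rw [div_le_iff₀ (by positivity)]
    calc Real.sin ((((i:ℕ):ℝ)+1) * x) ^ 2
        = |Real.sin ((((i:ℕ):ℝ)+1) * x)| * |Real.sin ((((i:ℕ):ℝ)+1) * x)| := by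
          rw [← abs_mul, abs_mul_self]; ring
      _ ≤ (((i:ℝ)+1) * Real.sin x) * 1 := by
          rw [habs] at hb
          exact mul_le_mul hb hb1 (abs_nonneg _) (by positivity)
      _ = ((i:ℝ)+1) * (Real.sin x)⁻¹ * Real.sin x ^ 2 := by
          field_simp
  calc |sphEig i x| = Real.sqrt (sphEig i x ^ 2) := (Real.sqrt_sq_eq_abs _).symm
    _ ≤ Real.sqrt (((i:ℝ)+1) * (Real.sin x)⁻¹) := Real.sqrt_le_sqrt h1
    _ = Real.sqrt ((i:ℝ)+1) * Real.sqrt (Real.sin x)⁻¹ := Real.sqrt_mul (by positivity) _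

lemma D_int : IntegrableOn (fun x => Real.sqrt (Real.sin x)⁻¹) (Ioo 0 π) := by
  have hG1 : IntegrableOn (fun x : ℝ => x ^ (-(1/2) : ℝ)) (Ioo 0 π) :=
    ((intervalIntegral.intervalIntegrable_rpow' (by norm_num)).1).mono_set Ioo_subset_Ioc_self
  have hG2 : IntegrableOn (fun x : ℝ => (π - x) ^ (-(1/2) : ℝ)) (Ioo 0 π) := by
    have h := (intervalIntegral.intervalIntegrable_rpow' (r := -(1/2)) (by norm_num)
      (a := 0) (b := π)).comp_sub_left π
    simp only [sub_zero, sub_self] at h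
    exact (h.symm.1).mono_set Ioo_subset_Ioc_self
  have hGint : IntegrableOn
      (fun x : ℝ => Real.sqrt (π/2) * (x ^ (-(1/2) : ℝ) + (π - x) ^ (-(1/2) : ℝ)))
      (Ioo 0 π) := ((hG1.add hG2).const_mul _)
  have key : ∀ y : ℝ, 0 < y → y ≤ π/2 →
      Real.sqrt (Real.sin y)⁻¹ ≤ Real.sqrt (π/2) * y ^ (-(1/2) : ℝ) := by
    intro y hy hy2
    have hsy : 2/π * y ≤ Real.sin y := Real.mul_le_sin hy.le hy2
    have hsy0 : 0 < 2/π * y := by positivity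
    have hinv : (Real.sin y)⁻¹ ≤ (π/2) * y⁻¹ := by
      have := inv_anti₀ hsy0 hsy
      calc (Real.sin y)⁻¹ ≤ (2/π * y)⁻¹ := this
        _ = (π/2) * y⁻¹ := by field_simp
    have hrw : y ^ (-(1/2) : ℝ) = Real.sqrt y⁻¹ := by
      rw [Real.rpow_neg hy.le, Real.sqrt_inv, Real.sqrt_eq_rpow]
    calc Real.sqrt (Real.sin y)⁻¹ ≤ Real.sqrt ((π/2) * y⁻¹) := Real.sqrt_le_sqrt hinv
      _ = Real.sqrt (π/2) * Real.sqrt y⁻¹ := Real.sqrt_mul (by positivity) _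
      _ = Real.sqrt (π/2) * y ^ (-(1/2) : ℝ) := by rw [hrw]
  refine Integrable.mono' hGint ?_ ?_
  · exact (Real.continuous_sqrt.measurable.comp
      Real.continuous_sin.measurable.inv).aestronglyMeasurable
  · filter_upwards [ae_restrict_mem measurableSet_Ioo] with x hx
    have h1 : (0:ℝ) < x := hx.1
    have h2 : x < π := hx.2
    rw [Real.norm_eq_abs, abs_of_nonneg (Real.sqrt_nonneg _)]
    rcases le_or_gt x (π/2) with hc | hc
    · have := key x h1 hc
      have hb : 0 ≤ (π - x) ^ (-(1/2) : ℝ) := Real.rpow_nonneg (by linarith) _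
      have hs2 : (0:ℝ) ≤ Real.sqrt (π/2) := Real.sqrt_nonneg _
      nlinarith [mul_nonneg hs2 hb]
    · have hpx1 : 0 < π - x := by linarith
      have hpx2 : π - x ≤ π/2 := by linarith
      have := key (π - x) hpx1 hpx2
      rw [Real.sin_pi_sub] at this
      have hb : 0 ≤ x ^ (-(1/2) : ℝ) := Real.rpow_nonneg h1.le _
      have hs2 : (0:ℝ) ≤ Real.sqrt (π/2) := Real.sqrt_nonneg _
      nlinarith [mul_nonneg hs2 hb]


noncomputable def C0 : ℝ := ∫ x in Ioo 0 π, Real.sqrt (Real.sin x)⁻¹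

lemma swap_lemma (bc : ℕ → ℝ) (hs : Summable fun i => |bc i| * Real.sqrt ((i:ℝ)+1))
    (w : ℝ → ℝ) (hw : Measurable w) (hw1 : ∀ x, |w x| ≤ 1) :
    ∫ x in Ioo 0 π, ((∑' i, bc i * sphEig i x) * w x)
      = ∑' i, bc i * ∫ x in Ioo 0 π, sphEig i x * w x := by
  set F : ℕ → ℝ → ℝ := fun i x => bc i * (sphEig i x * w x) with hF
  have hmeas : ∀ i, Measurable (F i) := fun i =>
    (measurable_const.mul ((sphEig_meas i).mul hw))
  have hint : ∀ i, Integrable (F i) (volume.restrict (Ioo 0 π)) := by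
    intro i
    refine Integrable.mono' (integrable_const (|bc i| * ((i:ℝ)+1)))
      (hmeas i).aestronglyMeasurable ?_
    refine Filter.Eventually.of_forall fun x => ?_
    rw [Real.norm_eq_abs, hF]
    simp only
    rw [abs_mul, abs_mul]
    have h1 := abs_sphEig_le i x
    have h2 := hw1 x
    calc |bc i| * (|sphEig i x| * |w x|) ≤ |bc i| * (((i:ℝ)+1) * 1) := by
          gcongr <;> first | exact h1 | exact h2 | positivity
      _ = |bc i| * ((i:ℝ)+1) := by ring
  have hnorm : ∀ i, (∫ x in Ioo 0 π, ‖F i x‖) ≤ |bc i| * Real.sqrt ((i:ℝ)+1) * C0 := by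
    intro i
    have hle : ∀ x ∈ Ioo (0:ℝ) π,
        ‖F i x‖ ≤ (|bc i| * Real.sqrt ((i:ℝ)+1)) * Real.sqrt (Real.sin x)⁻¹ := by
      intro x hx
      rw [Real.norm_eq_abs, hF]
      simp only
      rw [abs_mul, abs_mul]
      have h1 := abs_sphEig_le_sqrt i hx
      have h2 := hw1 x
      calc |bc i| * (|sphEig i x| * |w x|)
          ≤ |bc i| * ((Real.sqrt ((i:ℝ)+1) * Real.sqrt (Real.sin x)⁻¹) * 1) := by
            gcongr <;> first | exact h1 | exact h2 | positivity
        _ = (|bc i| * Real.sqrt ((i:ℝ)+1)) * Real.sqrt (Real.sin x)⁻¹ := by ring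
    calc (∫ x in Ioo 0 π, ‖F i x‖)
        ≤ ∫ x in Ioo 0 π, (|bc i| * Real.sqrt ((i:ℝ)+1)) * Real.sqrt (Real.sin x)⁻¹ := by
          refine integral_mono_of_nonneg (Filter.Eventually.of_forall fun x => norm_nonneg _)
            (D_int.const_mul _) ?_
          filter_upwards [ae_restrict_mem measurableSet_Ioo] with x hx
          exact hle x hx
      _ = |bc i| * Real.sqrt ((i:ℝ)+1) * C0 := by
          rw [integral_const_mul]; rfl
  have hsum2 : Summable fun i => ∫ x in Ioo 0 π, ‖F i x‖ := by
    refine Summable.of_nonneg_of_le (fun i => integral_nonneg fun x => norm_nonneg _)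
      hnorm ?_
    simpa [mul_assoc] using hs.mul_right C0
  have hswap := MeasureTheory.integral_tsum_of_summable_integral_norm hint hsum2
  have hpt : ∀ x : ℝ, (∑' i, F i x) = (∑' i, bc i * sphEig i x) * w x := by
    intro x
    rw [← tsum_mul_right]
    congr 1 with i
    rw [hF]; ring
  calc ∫ x in Ioo 0 π, ((∑' i, bc i * sphEig i x) * w x)
      = ∫ x in Ioo 0 π, (∑' i, F i x) := by
        refine integral_congr_ae (Filter.Eventually.of_forall fun x => ?_)
        simpa using (hpt x).symm
    _ = ∑' i, ∫ x in Ioo 0 π, F i x := hswap.symm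
    _ = ∑' i, bc i * ∫ x in Ioo 0 π, sphEig i x * w x := by
        congr 1 with i
        rw [hF]
        simp only
        exact integral_const_mul _ _


lemma summable_rpow_shift {p : ℝ} (hp : p < -1) :
    Summable (fun i : ℕ => ((i:ℝ)+1) ^ p) := by
  have h : Summable (fun n : ℕ => (n:ℝ) ^ p) := Real.summable_nat_rpow.mpr hp
  have := (summable_nat_add_iff (f := fun n : ℕ => (n:ℝ) ^ p) 1).mpr h
  refine this.congr fun i => ?_
  push_cast
  norm_num

lemma tsum_CS (f g : ℕ → ℝ) (hf0 : ∀ i, 0 ≤ f i) (hg0 : ∀ i, 0 ≤ g i)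
    (hf : Summable fun i => f i ^ 2) (hg : Summable fun i => g i ^ 2) :
    ∑' i, f i * g i ≤ Real.sqrt (∑' i, f i ^ 2) * Real.sqrt (∑' i, g i ^ 2) := by
  have hfg : Summable fun i => f i * g i := by
    refine Summable.of_nonneg_of_le (fun i => mul_nonneg (hf0 i) (hg0 i))
      (fun i => ?_) ((hf.add hg).div_const 2)
    have := two_mul_le_add_sq (f i) (g i)
    linarith
  refine Summable.tsum_le_of_sum_le hfg fun s => ?_
  calc ∑ i ∈ s, f i * g i
      ≤ Real.sqrt (∑ i ∈ s, f i ^ 2) * Real.sqrt (∑ i ∈ s, g i ^ 2) :=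
        Real.sum_mul_le_sqrt_mul_sqrt s f g
    _ ≤ Real.sqrt (∑' i, f i ^ 2) * Real.sqrt (∑' i, g i ^ 2) := by
        gcongr
        · exact Summable.sum_le_tsum s (fun i _ => sq_nonneg _) hf
        · exact Summable.sum_le_tsum s (fun i _ => sq_nonneg _) hg


lemma rpow_sq (x : ℝ) (hx : 0 < x) (t : ℝ) : (x ^ t) ^ 2 = x ^ (2*t) := by
  rw [sq, ← Real.rpow_add hx]; ring_nf


end Stmt14Aux

open Stmt14Aux

set_option maxHeartbeats 1000000 in
/-- diagonal matrix elements: for `b₀ ∈ H^{r+1+δ}_x`, for every `j`,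
`⟨b₀ e_j, e_j⟩ = (1/π)∫₀^π b₀(x)dx + r_j(b₀)` with
`|r_j(b₀)| ≤ c(δ) ‖b₀‖_{H^{r+1+δ}_x} / (2ω_j)^r`. -/
theorem stmt14 (r δ : ℝ) (hr : 0 ≤ r) (hδ : 0 < δ) (b0 : ℝ → ℝ) (bc : ℕ → ℝ)
    (hb : ∀ x ∈ Set.Ioo 0 Real.pi, b0 x = ∑' j : ℕ, bc j * sphEig j x)
    (hsum : Summable fun j : ℕ => bc j ^ 2 * ((j : ℝ) + 1) ^ (2 * (r + 1 + δ)))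
    (j : ℕ) :
    |(2 / Real.pi) * (∫ x in (0:ℝ)..Real.pi, b0 x * sphEig j x * sphEig j x * Real.sin x ^ 2)
        - (1 / Real.pi) * ∫ x in (0:ℝ)..Real.pi, b0 x|
      ≤ embConst δ *
          Real.sqrt (∑' i : ℕ, bc i ^ 2 * ((i : ℝ) + 1) ^ (2 * (r + 1 + δ))) /
          (2 * ((j : ℝ) + 1)) ^ r := by
  have hπ : (0:ℝ) < π := Real.pi_pos
  set s : ℝ := r + 1 + δ with hsdef
  have hs1 : 1 < s := by simp [hsdef]; linarith
  have hip1 : ∀ i : ℕ, (0:ℝ) < (i:ℝ)+1 := fun i => by positivity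
  -- summability of |bc i| * (i+1)^s squared = hsum
  have habs_sq : Summable fun i => (|bc i| * ((i:ℝ)+1) ^ s) ^ 2 := by
    refine hsum.congr fun i => ?_
    rw [mul_pow, sq_abs, rpow_sq _ (hip1 i)]
  -- Summable |bc i| * sqrt (i+1)
  have hS : Summable fun i => |bc i| * Real.sqrt ((i:ℝ)+1) := by
    have hb2 : Summable fun i : ℕ => ((i:ℝ)+1) ^ ((1:ℝ) - 2*s) :=
      summable_rpow_shift (by linarith)
    refine Summable.of_nonneg_of_le (fun i => by positivity) (fun i => ?_)
      ((habs_sq.add hb2).div_const 2)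
    have key : |bc i| * Real.sqrt ((i:ℝ)+1)
        = (|bc i| * ((i:ℝ)+1) ^ s) * (((i:ℝ)+1) ^ ((1:ℝ)/2 - s)) := by
      rw [mul_assoc, ← Real.rpow_add (hip1 i),
        show s + ((1:ℝ)/2 - s) = 1/2 by ring, ← Real.sqrt_eq_rpow]
    have h2 := two_mul_le_add_sq (|bc i| * ((i:ℝ)+1) ^ s) (((i:ℝ)+1) ^ ((1:ℝ)/2 - s))
    have h3 : (((i:ℝ)+1) ^ ((1:ℝ)/2 - s)) ^ 2 = ((i:ℝ)+1) ^ ((1:ℝ) - 2*s) := by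
      rw [rpow_sq _ (hip1 i)]; ring_nf
    rw [key]
    rw [h3] at h2
    linarith
  have habs : Summable fun i => |bc i| := by
    refine Summable.of_nonneg_of_le (fun i => abs_nonneg _) (fun i => ?_) hS
    have h1 : (1:ℝ) ≤ Real.sqrt ((i:ℝ)+1) := Real.one_le_sqrt.mpr (by push_cast; linarith)
    nlinarith [abs_nonneg (bc i)]
  -- the weights
  set d : ℕ := 2*(j+1) with hd
  set w1 : ℝ → ℝ := fun x => Real.sin (((j:ℝ)+1) * x) ^ 2 with hw1def
  have hw1m : Measurable w1 :=
    ((Real.continuous_sin.comp (continuous_const.mul continuous_id)).pow 2).measurable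
  have hw1b : ∀ x, |w1 x| ≤ 1 := by
    intro x
    rw [hw1def]
    simp only [abs_pow]
    calc |Real.sin (((j:ℝ)+1) * x)| ^ 2 ≤ 1 ^ 2 := by
          gcongr
          exact Real.abs_sin_le_one _
      _ = 1 := one_pow 2
  -- integral 1 rewrite
  have hI1 : (∫ x in (0:ℝ)..π, b0 x * sphEig j x * sphEig j x * Real.sin x ^ 2)
      = ∑' i, bc i * ∫ x in Ioo 0 π, sphEig i x * w1 x := by
    rw [intervalIntegral.integral_of_le hπ.le, integral_Ioc_eq_integral_Ioo]
    rw [← swap_lemma bc hS w1 hw1m hw1b]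
    refine setIntegral_congr_fun measurableSet_Ioo fun x hx => ?_
    have hsin : Real.sin x ≠ 0 := ne_of_gt (Real.sin_pos_of_pos_of_lt_pi hx.1 hx.2)
    rw [hb x hx]
    rw [hw1def]
    simp only [sphEig]
    field_simp
    rw [mul_comm]; congr 1; exact tsum_congr fun i => by ring
  have hI2 : (∫ x in (0:ℝ)..π, b0 x)
      = ∑' i, bc i * ∫ x in Ioo 0 π, sphEig i x * (fun _ : ℝ => (1:ℝ)) x := by
    rw [intervalIntegral.integral_of_le hπ.le, integral_Ioc_eq_integral_Ioo]
    rw [← swap_lemma bc hS (fun _ => 1) measurable_const (by intro x; simp)]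
    refine setIntegral_congr_fun measurableSet_Ioo fun x hx => ?_
    rw [hb x hx]
    simp
  -- evaluate the inner integrals
  have hcos_int : ∀ i : ℕ, IntegrableOn (fun x => sphEig i x * Real.cos (((d:ℕ):ℝ) * x))
      (Ioo 0 π) := by
    intro i
    refine Integrable.mono' (integrable_const (((i:ℝ)+1)))
      ((sphEig_meas i).mul ((Real.continuous_cos.comp
        (continuous_const.mul continuous_id)).measurable)).aestronglyMeasurable ?_
    refine Filter.Eventually.of_forall fun x => ?_
    rw [Real.norm_eq_abs, abs_mul]
    calc |sphEig i x| * |Real.cos ((d:ℝ) * x)| ≤ ((i:ℝ)+1) * 1 := by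
          gcongr <;> first | exact abs_sphEig_le i x | exact Real.abs_cos_le_one _ | positivity
      _ = (i:ℝ)+1 := mul_one _
  have halpha : ∀ i : ℕ, (∫ x in Ioo 0 π, sphEig i x * w1 x)
      = (if Even i then π else 0)/2 - (if Even i ∧ d ≤ i then π else 0)/2 := by
    intro i
    have hptw : ∀ x : ℝ, sphEig i x * w1 x
        = sphEig i x * (1/2 : ℝ) - (sphEig i x * Real.cos (((d:ℕ):ℝ) * x)) * (1/2 : ℝ) := by
      intro x
      rw [hw1def]
      simp only
      have : Real.sin (((j:ℝ)+1) * x) ^ 2 = 1/2 - Real.cos (2 * (((j:ℝ)+1) * x))/2 :=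
        Real.sin_sq_eq_half_sub _
      rw [this]
      have hc : 2 * (((j:ℝ)+1) * x) = ((d:ℕ):ℝ) * x := by rw [hd]; push_cast; ring
      rw [hc]
      ring
    rw [integral_congr_ae (Filter.Eventually.of_forall hptw)]
    rw [integral_sub ((sphEig_int i).mul_const _) ((hcos_int i).mul_const _)]
    rw [integral_mul_const, integral_mul_const, integral_sphEig]
    have := integral_sphEig_cos i (j+1)
    rw [← hd] at this
    rw [this]
    ring
  have hbeta : ∀ i : ℕ, (∫ x in Ioo 0 π, sphEig i x * (fun _ : ℝ => (1:ℝ)) x)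
      = if Even i then π else 0 := by
    intro i
    simp only [mul_one]
    exact integral_sphEig i
  -- the K function
  set K : ℕ → ℝ := fun i => if Even i ∧ d ≤ i then 1 else 0 with hK
  have hKnonneg : ∀ i, 0 ≤ K i := by
    intro i; rw [hK]; simp only; split <;> norm_num
  have hKle1 : ∀ i, K i ≤ 1 := by
    intro i; rw [hK]; simp only; split <;> norm_num
  set a : ℕ → ℝ := fun i => (if Even i then π else 0)/2
      - (if Even i ∧ d ≤ i then π else 0)/2 with ha
  set b : ℕ → ℝ := fun i => if Even i then π else 0 with hbdef
  have hI1' : (∫ x in (0:ℝ)..π, b0 x * sphEig j x * sphEig j x * Real.sin x ^ 2)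
      = ∑' i, bc i * a i := hI1.trans (tsum_congr fun i => by rw [halpha i])
  have hI2' : (∫ x in (0:ℝ)..π, b0 x) = ∑' i, bc i * b i :=
    hI2.trans (tsum_congr fun i => by rw [hbeta i])
  have ha_bd : ∀ i, |a i| ≤ π := by
    intro i
    rcases em (Even i) with h | h <;> rcases em (d ≤ i) with h2 | h2 <;>
      simp [ha, h, h2, abs_le] <;> first | linarith | (constructor <;> linarith)
  have hb_bd : ∀ i, |b i| ≤ π := by
    intro i
    rcases em (Even i) with h | h <;> simp [hbdef, h, abs_le, abs_of_nonneg hπ.le] <;>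
      first | linarith | (constructor <;> linarith)
  have hSa : Summable fun i => bc i * a i := by
    refine Summable.of_abs ?_
    refine Summable.of_nonneg_of_le (fun i => abs_nonneg _) (fun i => ?_) (habs.mul_right π)
    rw [abs_mul]
    exact mul_le_mul_of_nonneg_left (ha_bd i) (abs_nonneg _)
  have hSb : Summable fun i => bc i * b i := by
    refine Summable.of_abs ?_
    refine Summable.of_nonneg_of_le (fun i => abs_nonneg _) (fun i => ?_) (habs.mul_right π)
    rw [abs_mul]
    exact mul_le_mul_of_nonneg_left (hb_bd i) (abs_nonneg _)
  have hterm : ∀ i, (2/π)*(bc i * a i) - (1/π)*(bc i * b i) = -(bc i * K i) := by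
    intro i
    rcases em (Even i) with h | h <;> rcases em (d ≤ i) with h2 | h2 <;>
      simp [ha, hbdef, hK, h, h2] <;> field_simp <;> ring
  have hE : (2/π) * (∑' i, bc i * a i) - (1/π)*(∑' i, bc i * b i)
      = -∑' i, bc i * K i := by
    rw [← tsum_mul_left (a := 2/π), ← tsum_mul_left (a := 1/π),
      ← Summable.tsum_sub ((hSa.mul_left _)) ((hSb.mul_left _)), ← tsum_neg]
    exact tsum_congr hterm
  -- bound |∑ bc K|
  have hbcK : Summable fun i => |bc i| * K i := by
    refine Summable.of_nonneg_of_le (fun i => mul_nonneg (abs_nonneg _) (hKnonneg i))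
      (fun i => ?_) habs
    nlinarith [hKle1 i, abs_nonneg (bc i), hKnonneg i]
  have habsE : |∑' i, bc i * K i| ≤ ∑' i, |bc i| * K i := by
    have h1 : (∀ i, ‖bc i * K i‖ = |bc i| * K i) := by
      intro i
      rw [Real.norm_eq_abs, abs_mul, abs_of_nonneg (hKnonneg i)]
    have := norm_tsum_le_tsum_norm (f := fun i => bc i * K i) (by
      refine hbcK.congr fun i => (h1 i).symm)
    rw [Real.norm_eq_abs] at this
    exact this.trans_eq (tsum_congr h1)
  -- Cauchy-Schwarz
  set f : ℕ → ℝ := fun i => |bc i| * ((i:ℝ)+1) ^ s with hf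
  set g : ℕ → ℝ := fun i => ((i:ℝ)+1) ^ (-s) * K i with hg
  have hfg : ∀ i, |bc i| * K i = f i * g i := by
    intro i
    rw [hf, hg]
    simp only
    rw [show |bc i| * ((i:ℝ)+1) ^ s * (((i:ℝ)+1) ^ (-s) * K i)
      = |bc i| * (((i:ℝ)+1) ^ s * ((i:ℝ)+1) ^ (-s)) * K i by ring,
      ← Real.rpow_add (hip1 i), add_neg_cancel, Real.rpow_zero, mul_one]
  have hg2 : Summable fun i => g i ^ 2 := by
    refine Summable.of_nonneg_of_le (fun i => sq_nonneg _) (fun i => ?_)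
      (summable_rpow_shift (p := -(2*s)) (by linarith))
    rw [hg]
    simp only [mul_pow]
    have h1 : (((i:ℝ)+1) ^ (-s)) ^ 2 = ((i:ℝ)+1) ^ (-(2*s)) := by
      rw [rpow_sq _ (hip1 i)]; ring_nf
    have h2 : K i ^ 2 ≤ 1 := by nlinarith [hKle1 i, hKnonneg i]
    nlinarith [Real.rpow_nonneg (hip1 i).le (-(2*s)), h1.le, h1.ge,
      sq_nonneg (((i:ℝ)+1) ^ (-s))]
  have hCS : ∑' i, |bc i| * K i ≤ Real.sqrt (∑' i, f i ^ 2) * Real.sqrt (∑' i, g i ^ 2) := by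
    rw [tsum_congr hfg]
    exact tsum_CS f g (fun i => mul_nonneg (abs_nonneg _) (Real.rpow_nonneg (hip1 i).le _))
      (fun i => mul_nonneg (Real.rpow_nonneg (hip1 i).le _) (hKnonneg i)) habs_sq hg2
  have hfS : (∑' i, f i ^ 2) = ∑' i, bc i ^ 2 * ((i:ℝ)+1) ^ (2*s) := by
    refine tsum_congr fun i => ?_
    rw [hf]
    simp only
    rw [mul_pow, sq_abs, rpow_sq _ (hip1 i)]
  have h2ω0 : (0:ℝ) < 2 * ((j:ℝ)+1) := by positivity
  set Sdel : ℝ := ∑' i : ℕ, ((i:ℝ)+1) ^ (-(1 + 2*δ)) with hSdel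
  have hg2sum : (∑' i, g i ^ 2) ≤ (2*((j:ℝ)+1)) ^ (-(2*r)) * Sdel := by
    rw [hSdel, ← tsum_mul_left]
    refine Summable.tsum_le_tsum (fun i => ?_) hg2
      ((summable_rpow_shift (p := -(1+2*δ)) (by linarith)).mul_left _)
    rw [hg]
    simp only [mul_pow]
    have h1 : (((i:ℝ)+1) ^ (-s)) ^ 2 = ((i:ℝ)+1) ^ (-(2*s)) := by
      rw [rpow_sq _ (hip1 i)]; ring_nf
    rcases em (Even i ∧ d ≤ i) with h | h
    · have hKi : K i = 1 := by rw [hK]; simp [h]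
      rw [hKi, one_pow, mul_one, h1]
      have hsplit : ((i:ℝ)+1) ^ (-(2*s)) = ((i:ℝ)+1) ^ (-(2*r)) * ((i:ℝ)+1) ^ (-(2+2*δ)) := by
        rw [← Real.rpow_add (hip1 i)]
        congr 1
        rw [hsdef]; ring
      rw [hsplit]
      have hle1 : ((i:ℝ)+1) ^ (-(2*r)) ≤ (2*((j:ℝ)+1)) ^ (-(2*r)) := by
        refine Real.rpow_le_rpow_of_nonpos h2ω0 ?_ (by linarith)
        have : (d:ℝ) ≤ (i:ℝ) := Nat.cast_le.mpr h.2
        rw [hd] at this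
        push_cast at this
        linarith
      have hle2 : ((i:ℝ)+1) ^ (-(2+2*δ)) ≤ ((i:ℝ)+1) ^ (-(1+2*δ)) := by
        refine Real.rpow_le_rpow_of_exponent_le (by push_cast; linarith) (by linarith)
      have hnn2 : (0:ℝ) ≤ ((i:ℝ)+1) ^ (-(2+2*δ)) := Real.rpow_nonneg (hip1 i).le _
      have hnn3 : (0:ℝ) ≤ (2*((j:ℝ)+1)) ^ (-(2*r)) := Real.rpow_nonneg h2ω0.le _
      exact mul_le_mul hle1 hle2 hnn2 hnn3
    · have hKi : K i = 0 := by rw [hK]; simp [h]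
      rw [hKi]
      have h0 : (0:ℝ) ≤ (2*((j:ℝ)+1)) ^ (-(2*r)) * ((i:ℝ)+1) ^ (-(1+2*δ)) :=
        mul_nonneg (Real.rpow_nonneg h2ω0.le _) (Real.rpow_nonneg (hip1 i).le _)
      simpa using h0
  have hSdelnn : 0 ≤ Sdel := tsum_nonneg fun i => Real.rpow_nonneg (hip1 i).le _
  have hsqrtg : Real.sqrt (∑' i, g i ^ 2)
      ≤ (2*((j:ℝ)+1)) ^ (-r) * Real.sqrt Sdel := by
    calc Real.sqrt (∑' i, g i ^ 2) ≤ Real.sqrt ((2*((j:ℝ)+1)) ^ (-(2*r)) * Sdel) :=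
          Real.sqrt_le_sqrt hg2sum
      _ = (2*((j:ℝ)+1)) ^ (-r) * Real.sqrt Sdel := by
          rw [Real.sqrt_mul (Real.rpow_nonneg h2ω0.le _)]
          congr 1
          have : (2*((j:ℝ)+1)) ^ (-(2*r)) = ((2*((j:ℝ)+1)) ^ (-r)) ^ 2 := by
            rw [rpow_sq _ h2ω0]; ring_nf
          rw [this, Real.sqrt_sq (Real.rpow_nonneg h2ω0.le _)]
  -- final assembly
  rw [hI1', hI2', hE, abs_neg]
  have hsqS : (0:ℝ) ≤ Real.sqrt (∑' i, f i ^ 2) := Real.sqrt_nonneg _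
  calc |∑' i, bc i * K i| ≤ ∑' i, |bc i| * K i := habsE
    _ ≤ Real.sqrt (∑' i, f i ^ 2) * Real.sqrt (∑' i, g i ^ 2) := hCS
    _ ≤ Real.sqrt (∑' i, f i ^ 2) * ((2*((j:ℝ)+1)) ^ (-r) * Real.sqrt Sdel) := by
        gcongr
    _ ≤ embConst δ * Real.sqrt (∑' i, bc i ^ 2 * ((i:ℝ)+1) ^ (2*s)) / (2*((j:ℝ)+1)) ^ r := by
        rw [hfS, embConst, Real.rpow_neg h2ω0.le, div_eq_mul_inv, ← hSdel]
        have h1 : (1:ℝ) ≤ Real.sqrt (2*π) := by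
          rw [Real.one_le_sqrt]
          nlinarith [Real.pi_gt_three]
        set A := Real.sqrt (∑' i, bc i ^ 2 * ((i:ℝ)+1) ^ (2*s)) with hA
        have hA0 : 0 ≤ A := Real.sqrt_nonneg _
        have hB0 : 0 ≤ Real.sqrt Sdel := Real.sqrt_nonneg _
        have hC0 : 0 ≤ ((2*((j:ℝ)+1)) ^ r)⁻¹ := inv_nonneg.mpr (Real.rpow_nonneg h2ω0.le _)
        nlinarith [mul_nonneg (mul_nonneg hA0 hB0) hC0,
          mul_nonneg (mul_nonneg (sub_nonneg.mpr h1) (mul_nonneg hA0 hB0)) hC0]
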